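/- Let σ ≥ 1, let μ : (0,∞) → ℝ be a normal majorant of the class (σ,1) with μ(η) → 0 as η → 0⁺, and let γ = {t ∈ ℂ : |t+1| = 1}. Then for every t ∈ γ the function η ↦ 8·μ(η)·[((Re t)² − (Im t)²)(η⁴ + |t|⁴) − 2η²|t|⁴]/|η² − t²|⁴ · η is integrable on (0,1), and the function g : γ → ℝ defined by g(t) = 8·∫₀¹ μ(η)·[((Re t)² − (Im t)²)(η⁴ + |t|⁴) − 2η²|t|⁴]/|η² − t²|⁴ · η dη is continuous on γ. -/

import Mathlib

open Set MeasureTheory intervalIntegral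
private lemma circle_eq {t : ℂ} (ht : ‖t+1‖ = 1) :
    t.re^2 + 2*t.re + t.im^2 = 0 := by
  have h := congrArg (fun x : ℝ => x^2) ht
  simp only [Complex.sq_norm, Complex.normSq_apply, Complex.add_re, Complex.add_im,
    Complex.one_re, Complex.one_im, one_pow] at h
  nlinarith [h]

private lemma abs_sq' (t : ℂ) : ‖t‖ ^ 2 = t.re^2 + t.im^2 := by
  rw [Complex.sq_norm, Complex.normSq_apply]; ring

private lemma abs_four (t : ℂ) : ‖t‖ ^ 4 = (t.re^2 + t.im^2)^2 := by
  rw [show ‖t‖ ^ 4 = (‖t‖ ^ 2)^2 by ring, abs_sq']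

private lemma denom_sq (t : ℂ) (η : ℝ) :
    ‖(η:ℂ)^2 - t^2‖^2 = (η^2 - (t.re^2 - t.im^2))^2 + (2*t.re*t.im)^2 := by
  rw [Complex.sq_norm, Complex.normSq_apply]
  simp [pow_two, Complex.sub_re, Complex.sub_im, Complex.mul_re, Complex.mul_im,
    Complex.ofReal_re, Complex.ofReal_im]
  ring

private lemma denom_ne {t : ℂ} (ht : ‖t+1‖ = 1) (ht0 : t ≠ 0)
    {η : ℝ} (h0 : 0 ≤ η) (h1 : η ≤ 1) : (η:ℂ)^2 - t^2 ≠ 0 := by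
  intro h
  have hγ := circle_eq ht
  have hre : η^2 - (t.re^2 - t.im^2) = 0 := by
    have := congrArg Complex.re h
    simpa [pow_two, Complex.sub_re, Complex.mul_re, Complex.ofReal_re, Complex.ofReal_im]
      using this
  have him : t.re * t.im = 0 := by
    have := congrArg Complex.im h
    simp [pow_two, Complex.sub_im, Complex.mul_im, Complex.ofReal_re, Complex.ofReal_im] at this
    linarith
  rcases mul_eq_zero.mp him with ha | hb
  · have hb0 : t.im = 0 := by nlinarith [hγ, sq_nonneg t.im]
    exact ht0 (Complex.ext ha hb0)
  · have h4 : t.re = 0 ∨ t.re = -2 := by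
      have : t.re * (t.re + 2) = 0 := by nlinarith [hγ]
      rcases mul_eq_zero.mp this with h' | h'
      · exact Or.inl h'
      · exact Or.inr (by linarith)
    rcases h4 with h' | h'
    · exact ht0 (Complex.ext h' hb)
    · nlinarith [hre]

private lemma denom_lower {t : ℂ} (ht : ‖t+1‖ = 1)
    (hle : ‖t‖ ≤ 1) (η : ℝ) :
    η^4 + ‖t‖^4 ≤ ‖(η:ℂ)^2 - t^2‖^2 := by
  have hγ := circle_eq ht
  have h1 : t.re^2 + t.im^2 ≤ 1 := by
    have h2 : ‖t‖ ^ 2 ≤ 1 := by nlinarith [norm_nonneg t]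
    rwa [abs_sq'] at h2
  have ha0 : t.re ≤ 0 := by nlinarith [sq_nonneg t.re, sq_nonneg t.im]
  have ha1 : 0 ≤ t.re + 1 := by linarith
  rw [denom_sq, abs_four]
  nlinarith [mul_nonneg (mul_nonneg (sq_nonneg η) (neg_nonneg.mpr ha0)) ha1, hγ, sq_nonneg η]

private lemma num_bound (t : ℂ) (η : ℝ) :
    |(t.re^2 - t.im^2) * (η^4 + ‖t‖^4) - 2*η^2*‖t‖^4|
      ≤ 2 * ‖t‖^2 * (η^4 + ‖t‖^4) := by
  rw [abs_four, abs_sq', abs_le]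
  constructor <;>
    nlinarith [sq_nonneg (η^2 - (t.re^2 + t.im^2)), sq_nonneg (η^2 + (t.re^2 + t.im^2)),
      sq_nonneg t.re, sq_nonneg t.im, sq_nonneg η, sq_nonneg (η^2),
      mul_nonneg (add_nonneg (sq_nonneg t.re) (sq_nonneg t.im)) (sq_nonneg (η^2 - (t.re^2 + t.im^2))),
      mul_nonneg (sq_nonneg t.im) (add_nonneg (sq_nonneg (η^2)) (sq_nonneg (t.re^2+t.im^2))),
      mul_nonneg (sq_nonneg t.re) (add_nonneg (sq_nonneg (η^2)) (sq_nonneg (t.re^2+t.im^2))),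
      mul_nonneg (sq_nonneg η) (sq_nonneg (t.re^2+t.im^2))]

private lemma ratio_bound {r η : ℝ} (hr : 0 < r) (hη : 0 < η) :
    2*(r^2*η + r*η^2)/(η^4+r^4) ≤ 6*r/(η^2+r^2) := by
  rw [div_le_div_iff₀ (by positivity) (by positivity)]
  nlinarith [mul_nonneg hr.le (mul_nonneg (sq_nonneg (η-r)) (by positivity : (0:ℝ) ≤ η^2+η*r+r^2)),
    mul_nonneg hr.le (sq_nonneg (η^2-r^2)),
    mul_nonneg hr.le (sq_nonneg (η^2)), mul_nonneg hr.le (sq_nonneg (r^2))]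

private lemma arctan_deriv (r : ℝ) (hr : 0 < r) (η : ℝ) :
    HasDerivAt (fun x : ℝ => Real.arctan (x/r)) (r/(η^2+r^2)) η := by
  have h := (Real.hasDerivAt_arctan (η/r)).comp η ((hasDerivAt_id η).div_const r)
  refine h.congr_deriv ?_
  field_simp
  ring

private lemma arctan_integral (r : ℝ) (hr : 0 < r) :
    ∫ η in (0:ℝ)..1, r/(η^2+r^2) = Real.arctan (1/r) := by
  have hc : Continuous (fun η : ℝ => r/(η^2+r^2)) :=
    continuous_const.div (by fun_prop) (fun x => by positivity)
  have h := intervalIntegral.integral_eq_sub_of_hasDerivAt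
    (a := (0:ℝ)) (b := 1)
    (f := fun x : ℝ => Real.arctan (x/r)) (f' := fun η => r/(η^2+r^2))
    (fun η _ => arctan_deriv r hr η) (hc.intervalIntegrable 0 1)
  rw [h]
  norm_num

open Set MeasureTheory intervalIntegral

section Aux
variable (σ : ℝ) (μ : ℝ → ℝ)

private lemma mu_nonneg (hμ_mono : ∀ x y : ℝ, 0 < x → x ≤ y → μ x ≤ μ y)
    (hμ0 : Filter.Tendsto μ (nhdsWithin 0 (Set.Ioi 0)) (nhds 0)) :
    ∀ η : ℝ, 0 < η → 0 ≤ μ η := by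
  intro η hη
  refine le_of_tendsto hμ0 ?_
  filter_upwards [self_mem_nhdsWithin,
    Filter.Eventually.filter_mono nhdsWithin_le_nhds (eventually_lt_nhds hη)] with x hx1 hx2
  exact hμ_mono x η hx1 hx2.le

private lemma mu_int (hμ_mono : ∀ x y : ℝ, 0 < x → x ≤ y → μ x ≤ μ y)
    (hμ0 : Filter.Tendsto μ (nhdsWithin 0 (Set.Ioi 0)) (nhds 0)) :
    IntervalIntegrable μ MeasureTheory.volume 0 1 := by
  have hnn := mu_nonneg μ hμ_mono hμ0
  set ν : ℝ → ℝ := fun x => if 0 < x then μ x else 0 with hν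
  have hmono : MonotoneOn ν (uIcc (0:ℝ) 1) := by
    rw [uIcc_of_le zero_le_one]
    intro x hx y hy hxy
    by_cases hx0 : 0 < x
    · have hy0 : 0 < y := lt_of_lt_of_le hx0 hxy
      simp only [hν, if_pos hx0, if_pos hy0]
      exact hμ_mono x y hx0 hxy
    · by_cases hy0 : 0 < y
      · simp only [hν, if_neg hx0, if_pos hy0]
        exact hnn y hy0
      · simp [hν, hx0, hy0]
  have hint := hmono.intervalIntegrable (μ := MeasureTheory.volume)
  rw [intervalIntegrable_iff] at hint ⊢
  refine hint.congr ?_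
  rw [Filter.EventuallyEq, ae_restrict_iff' measurableSet_uIoc]
  refine Filter.Eventually.of_forall (fun x hx => ?_)
  rw [uIoc_of_le zero_le_one] at hx
  simp [hν, hx.1]

private lemma mu_upper (hσ : 1 ≤ σ)
    (hμ_mono : ∀ x y : ℝ, 0 < x → x ≤ y → μ x ≤ μ y)
    (hμ_nm : ∀ lam η : ℝ, 1 < lam → 0 < η → μ (lam * η) ≤ σ * lam * μ η)
    (hμ0 : Filter.Tendsto μ (nhdsWithin 0 (Set.Ioi 0)) (nhds 0))
    {r η : ℝ} (hr : 0 < r) (hη : 0 < η) :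
    μ η ≤ σ * μ r * (1 + η / r) := by
  have hnn := mu_nonneg μ hμ_mono hμ0
  rcases le_or_gt η r with h | h
  · have h1 : μ η ≤ μ r := hμ_mono η r hη h
    nlinarith [mul_nonneg (sub_nonneg.mpr hσ) (hnn r hr),
      mul_nonneg (mul_nonneg (le_trans zero_le_one hσ) (hnn r hr)) (div_nonneg hη.le hr.le)]
  · have hlam : 1 < η / r := (one_lt_div hr).mpr h
    have := hμ_nm (η/r) r hlam hr
    rw [div_mul_cancel₀ _ hr.ne'] at this
    nlinarith [hnn r hr, this]
end Aux

private lemma gFun_aux_part1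
    (σ : ℝ) (hσ : 1 ≤ σ) (μ : ℝ → ℝ)
    (hμ_mono : ∀ x y : ℝ, 0 < x → x ≤ y → μ x ≤ μ y)
    (hμ_nm : ∀ lam η : ℝ, 1 < lam → 0 < η → μ (lam * η) ≤ σ * lam * μ η)
    (hμ0 : Filter.Tendsto μ (nhdsWithin 0 (Set.Ioi 0)) (nhds 0)) :
    (∀ t ∈ {t : ℂ | ‖t + 1‖ = 1},
      IntervalIntegrable
        (fun η : ℝ => 8 * (μ η *
          (((t.re ^ 2 - t.im ^ 2) * (η ^ 4 + ‖t‖ ^ 4)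
              - 2 * η ^ 2 * ‖t‖ ^ 4) /
            ‖(η : ℂ) ^ 2 - t ^ 2‖ ^ 4) * η))
        MeasureTheory.volume 0 1) := by
  intro t ht
  by_cases ht0 : t = 0
  · subst ht0
    have heq : (fun η : ℝ => 8 * (μ η *
          ((((Complex.re 0) ^ 2 - (Complex.im 0) ^ 2) * (η ^ 4 + ‖(0:ℂ)‖ ^ 4)
              - 2 * η ^ 2 * ‖(0:ℂ)‖ ^ 4) /
            ‖(η : ℂ) ^ 2 - 0 ^ 2‖ ^ 4) * η)) = fun _ => (0:ℝ) := by
      funext η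
      simp
    rw [heq]
    exact intervalIntegrable_const
  · have ht' : ‖t+1‖ = 1 := ht
    have hcont : ContinuousOn (fun η : ℝ => 8 * ((((t.re ^ 2 - t.im ^ 2) * (η ^ 4 + ‖t‖ ^ 4)
              - 2 * η ^ 2 * ‖t‖ ^ 4) /
            ‖(η : ℂ) ^ 2 - t ^ 2‖ ^ 4) * η)) (uIcc (0:ℝ) 1) := by
      rw [uIcc_of_le zero_le_one]
      refine continuousOn_const.mul (ContinuousOn.mul (ContinuousOn.div ?_ ?_ ?_) continuousOn_id)
      · fun_prop
      · exact ((continuous_norm.comp (by fun_prop : Continuous fun η : ℝ => (η:ℂ)^2 - t^2)).pow 4).continuousOn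
      · intro η hη
        exact pow_ne_zero 4 (norm_ne_zero_iff.mpr (denom_ne ht' ht0 hη.1 hη.2))
    have heq : (fun η : ℝ => 8 * (μ η *
          (((t.re ^ 2 - t.im ^ 2) * (η ^ 4 + ‖t‖ ^ 4)
              - 2 * η ^ 2 * ‖t‖ ^ 4) /
            ‖(η : ℂ) ^ 2 - t ^ 2‖ ^ 4) * η))
        = fun η : ℝ => μ η * (8 * ((((t.re ^ 2 - t.im ^ 2) * (η ^ 4 + ‖t‖ ^ 4)
              - 2 * η ^ 2 * ‖t‖ ^ 4) /
            ‖(η : ℂ) ^ 2 - t ^ 2‖ ^ 4) * η)) := by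
      funext η; ring
    rw [heq]
    exact (mu_int μ hμ_mono hμ0).mul_continuousOn hcont

private lemma gFun_aux_part2
    (σ : ℝ) (hσ : 1 ≤ σ) (μ : ℝ → ℝ)
    (hμ_mono : ∀ x y : ℝ, 0 < x → x ≤ y → μ x ≤ μ y)
    (hμ_nm : ∀ lam η : ℝ, 1 < lam → 0 < η → μ (lam * η) ≤ σ * lam * μ η)
    (hμ0 : Filter.Tendsto μ (nhdsWithin 0 (Set.Ioi 0)) (nhds 0))
    (t₀ : ℂ) (ht₀ : t₀ ∈ {t : ℂ | ‖t + 1‖ = 1}) (ht0 : t₀ ≠ 0) :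
    ContinuousWithinAt
      (fun t : ℂ => 8 * ∫ η in (0 : ℝ)..1, μ η *
          (((t.re ^ 2 - t.im ^ 2) * (η ^ 4 + ‖t‖ ^ 4)
              - 2 * η ^ 2 * ‖t‖ ^ 4) /
            ‖(η : ℂ) ^ 2 - t ^ 2‖ ^ 4) * η)
      {t : ℂ | ‖t + 1‖ = 1} t₀ := by
  have ht₀' : ‖t₀ + 1‖ = 1 := ht₀
  have hnn := mu_nonneg μ hμ_mono hμ0
  -- minimum of denominator over η ∈ [0,1]
  obtain ⟨η₀, hη₀mem, hη₀min⟩ := isCompact_Icc.exists_isMinOn (Set.nonempty_Icc.mpr zero_le_one)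
    ((continuous_norm.comp
      (by fun_prop : Continuous fun η : ℝ => (η:ℂ)^2 - t₀^2)).continuousOn)
  set m := ‖(η₀:ℂ)^2 - t₀^2‖ with hm_def
  have hm : 0 < m := norm_pos_iff.mpr (denom_ne ht₀' ht0 hη₀mem.1 hη₀mem.2)
  set δ := min 1 (m / (2*(2*‖t₀‖+1))) with hδ_def
  have hδ1 : δ ≤ 1 := min_le_left _ _
  have hδpos : 0 < δ := lt_min one_pos (by positivity)
  have hkey : ∀ t : ℂ, ‖t - t₀‖ < δ → ∀ η : ℝ, η ∈ Icc (0:ℝ) 1 →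
      m/2 ≤ ‖(η:ℂ)^2 - t^2‖ := by
    intro t htd η hη
    have h1 : m ≤ ‖(η:ℂ)^2 - t₀^2‖ := isMinOn_iff.mp hη₀min η hη
    have h2 : ‖(η:ℂ)^2 - t₀^2‖
        ≤ ‖(η:ℂ)^2 - t^2‖ + ‖t^2 - t₀^2‖ := by
      calc ‖(η:ℂ)^2 - t₀^2‖
          = ‖((η:ℂ)^2 - t^2) + (t^2 - t₀^2)‖ := by ring_nf
        _ ≤ _ := norm_add_le _ _
    have h3 : ‖t^2 - t₀^2‖ ≤ δ * (2*‖t₀‖ + 1) := by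
      have hfac : t^2 - t₀^2 = (t - t₀) * (t + t₀) := by ring
      rw [hfac, norm_mul]
      have ha : ‖t + t₀‖ ≤ 2*‖t₀‖ + 1 := by
        have h5 : ‖t + t₀‖ = ‖(t - t₀) + t₀ + t₀‖ := by ring_nf
        calc ‖t + t₀‖ = ‖(t - t₀) + t₀ + t₀‖ := h5
          _ ≤ ‖(t - t₀) + t₀‖ + ‖t₀‖ := norm_add_le _ _
          _ ≤ (‖t - t₀‖ + ‖t₀‖) + ‖t₀‖ :=
              add_le_add_left (norm_add_le _ _) _
          _ ≤ 2*‖t₀‖ + 1 := by nlinarith [htd.le, hδ1]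
      exact mul_le_mul htd.le ha (norm_nonneg _) hδpos.le
    have h4 : δ * (2*‖t₀‖+1) ≤ m/2 := by
      have h5 : δ ≤ m / (2*(2*‖t₀‖+1)) := min_le_right _ _
      have h6 := (le_div_iff₀ (by positivity : (0:ℝ) < 2*(2*‖t₀‖+1))).mp h5
      nlinarith [h6]
    linarith
  set R := ‖t₀‖ + 1 with hR_def
  have hR0 : 0 < R := by positivity
  set C := μ 1 * (2*R^2*(1+R^4) / (m/2)^4) * 1 with hC_def
  have hμ1 : 0 ≤ μ 1 := hnn 1 one_pos
  -- apply dominated convergence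
  have hI : ContinuousWithinAt
      (fun t : ℂ => ∫ η in (0 : ℝ)..1, μ η *
          (((t.re ^ 2 - t.im ^ 2) * (η ^ 4 + ‖t‖ ^ 4)
              - 2 * η ^ 2 * ‖t‖ ^ 4) /
            ‖(η : ℂ) ^ 2 - t ^ 2‖ ^ 4) * η)
      {t : ℂ | ‖t + 1‖ = 1} t₀ := by
    apply intervalIntegral.continuousWithinAt_of_dominated_interval
      (bound := fun _ : ℝ => C)
    · -- measurability
      refine Filter.Eventually.of_forall (fun t => ?_)
      have hμmeas : AEStronglyMeasurable μ (volume.restrict (Set.uIoc (0:ℝ) 1)) := by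
        have h := mu_int μ hμ_mono hμ0
        rw [intervalIntegrable_iff] at h
        exact h.1
      have hNm : Measurable (fun η : ℝ => (t.re ^ 2 - t.im ^ 2) * (η ^ 4 + ‖t‖ ^ 4)
          - 2 * η ^ 2 * ‖t‖ ^ 4) := by fun_prop
      have hDm : Measurable (fun η : ℝ => ‖(η : ℂ) ^ 2 - t ^ 2‖ ^ 4) :=
        ((continuous_norm.comp
          (by fun_prop : Continuous fun η : ℝ => (η:ℂ)^2 - t^2)).pow 4).measurable
      exact (hμmeas.mul ((hNm.div hDm).aestronglyMeasurable)).mul aestronglyMeasurable_id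
    · -- bound
      have hball : Metric.ball t₀ δ ∈ nhdsWithin t₀ {t : ℂ | ‖t + 1‖ = 1} :=
        mem_nhdsWithin_of_mem_nhds (Metric.ball_mem_nhds _ hδpos)
      filter_upwards [hball] with t htb
      refine Filter.Eventually.of_forall (fun η hηI => ?_)
      have hη : η ∈ Ioc (0:ℝ) 1 := by rwa [uIoc_of_le zero_le_one] at hηI
      have htd : ‖t - t₀‖ < δ := by
        rw [Metric.mem_ball, Complex.dist_eq] at htb; exact htb
      have hst : ‖t‖ ≤ R := by
        have := norm_add_le (t - t₀) t₀
        simp only [sub_add_cancel] at this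
        rw [hR_def]; nlinarith [htd.le, hδ1]
      have hDlow := hkey t htd η ⟨hη.1.le, hη.2⟩
      have hD4 : (m/2)^4 ≤ ‖(η:ℂ)^2 - t^2‖^4 :=
        pow_le_pow_left₀ (by positivity) hDlow 4
      have hNb : |(t.re ^ 2 - t.im ^ 2) * (η ^ 4 + ‖t‖ ^ 4)
          - 2 * η ^ 2 * ‖t‖ ^ 4| ≤ 2*R^2*(1+R^4) := by
        refine (num_bound t η).trans ?_
        have hs0 := norm_nonneg t
        have hs2 : ‖t‖^2 ≤ R^2 := by nlinarith
        have hs4 : ‖t‖^4 ≤ R^4 := by nlinarith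
        have hη4 : η^4 ≤ 1 := pow_le_one₀ hη.1.le hη.2
        nlinarith [mul_le_mul hs2 (add_le_add hη4 hs4) (by positivity) (by positivity : (0:ℝ) ≤ R^2)]
      rw [Real.norm_eq_abs, abs_mul, abs_mul, abs_of_nonneg (hnn η hη.1),
        abs_of_nonneg hη.1.le, abs_div, abs_of_nonneg (by positivity :
          (0:ℝ) ≤ ‖(η:ℂ)^2 - t^2‖^4)]
      have hdiv : |(t.re ^ 2 - t.im ^ 2) * (η ^ 4 + ‖t‖ ^ 4)
          - 2 * η ^ 2 * ‖t‖ ^ 4| / ‖(η:ℂ)^2 - t^2‖^4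
          ≤ 2*R^2*(1+R^4) / (m/2)^4 :=
        div_le_div₀ (by positivity) hNb (by positivity) hD4
      rw [hC_def]
      refine mul_le_mul (mul_le_mul (hμ_mono η 1 hη.1 hη.2) hdiv (by positivity) hμ1)
        hη.2 hη.1.le (by positivity)
    · exact intervalIntegrable_const
    · -- continuity in t
      refine Filter.Eventually.of_forall (fun η hηI => ?_)
      have hη : η ∈ Ioc (0:ℝ) 1 := by rwa [uIoc_of_le zero_le_one] at hηI
      have hNc : Continuous (fun t : ℂ => (t.re ^ 2 - t.im ^ 2) * (η ^ 4 + ‖t‖ ^ 4)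
          - 2 * η ^ 2 * ‖t‖ ^ 4) :=
        (((Complex.continuous_re.pow 2).sub (Complex.continuous_im.pow 2)).mul
          (continuous_const.add (continuous_norm.pow 4))).sub
          (continuous_const.mul (continuous_norm.pow 4))
      have hDc : Continuous (fun t : ℂ => ‖(η : ℂ) ^ 2 - t ^ 2‖ ^ 4) :=
        (continuous_norm.comp (by fun_prop : Continuous fun t : ℂ => (η:ℂ)^2 - t^2)).pow 4
      have hne : ‖(η:ℂ)^2 - t₀^2‖^4 ≠ 0 :=
        pow_ne_zero 4 (norm_ne_zero_iff.mpr (denom_ne ht₀' ht0 hη.1.le hη.2))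
      exact (((continuousAt_const.mul
        ((hNc.continuousAt).div (hDc.continuousAt) hne)).mul
        continuousAt_const) : ContinuousAt _ t₀).continuousWithinAt
  exact hI.const_mul 8

private lemma gFun_aux_part3
    (σ : ℝ) (hσ : 1 ≤ σ) (μ : ℝ → ℝ)
    (hμ_mono : ∀ x y : ℝ, 0 < x → x ≤ y → μ x ≤ μ y)
    (hμ_nm : ∀ lam η : ℝ, 1 < lam → 0 < η → μ (lam * η) ≤ σ * lam * μ η)
    (hμ0 : Filter.Tendsto μ (nhdsWithin 0 (Set.Ioi 0)) (nhds 0)) :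
    ContinuousWithinAt
      (fun t : ℂ => 8 * ∫ η in (0 : ℝ)..1, μ η *
          (((t.re ^ 2 - t.im ^ 2) * (η ^ 4 + ‖t‖ ^ 4)
              - 2 * η ^ 2 * ‖t‖ ^ 4) /
            ‖(η : ℂ) ^ 2 - t ^ 2‖ ^ 4) * η)
      {t : ℂ | ‖t + 1‖ = 1} 0 := by
  have hnn := mu_nonneg μ hμ_mono hμ0
  set γs := {t : ℂ | ‖t + 1‖ = 1} with hγs
  set g := (fun t : ℂ => 8 * ∫ η in (0 : ℝ)..1, μ η *
          (((t.re ^ 2 - t.im ^ 2) * (η ^ 4 + ‖t‖ ^ 4)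
              - 2 * η ^ 2 * ‖t‖ ^ 4) /
            ‖(η : ℂ) ^ 2 - t ^ 2‖ ^ 4) * η) with hg
  have hg0 : g 0 = 0 := by
    rw [hg]
    simp
  -- main estimate
  have hest : ∀ t : ℂ, t ∈ γs → t ≠ 0 → ‖t‖ ≤ 1 →
      ‖g t‖ ≤ 24 * Real.pi * σ * μ (‖t‖) := by
    intro t htγ ht0 ht1
    have htγ' : ‖t + 1‖ = 1 := htγ
    set r := ‖t‖ with hr_def
    have hr : 0 < r := norm_pos_iff.mpr ht0
    have hμr : 0 ≤ μ r := hnn r hr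
    have hσ0 : 0 < σ := lt_of_lt_of_le one_pos hσ
    have hb_cont : Continuous (fun η : ℝ => 6*σ*μ r*(r/(η^2+r^2))) :=
      continuous_const.mul (continuous_const.div (by fun_prop) (fun x => by positivity))
    have hb_int : IntervalIntegrable (fun η : ℝ => 6*σ*μ r*(r/(η^2+r^2)))
        MeasureTheory.volume 0 1 := hb_cont.intervalIntegrable 0 1
    have hpt : ∀ η : ℝ, η ∈ Set.uIoc (0:ℝ) 1 →
        ‖μ η * (((t.re ^ 2 - t.im ^ 2) * (η ^ 4 + ‖t‖ ^ 4)
              - 2 * η ^ 2 * ‖t‖ ^ 4) /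
            ‖(η : ℂ) ^ 2 - t ^ 2‖ ^ 4) * η‖
          ≤ 6*σ*μ r*(r/(η^2+r^2)) := by
      intro η hηI
      have hη : η ∈ Ioc (0:ℝ) 1 := by rwa [uIoc_of_le zero_le_one] at hηI
      have hη0 : 0 < η := hη.1
      have hNb : |(t.re ^ 2 - t.im ^ 2) * (η ^ 4 + ‖t‖ ^ 4)
          - 2 * η ^ 2 * ‖t‖ ^ 4| ≤ 2*r^2*(η^4 + r^4) := num_bound t η
      have hD2 : (η^4 + r^4)^2 ≤ ‖(η:ℂ)^2 - t^2‖^4 := by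
        have h1 := denom_lower htγ' ht1 η
        calc (η^4 + r^4)^2 ≤ (‖(η:ℂ)^2 - t^2‖^2)^2 := by
              apply pow_le_pow_left₀ (by positivity) h1
          _ = ‖(η:ℂ)^2 - t^2‖^4 := by ring
      have hdiv : |(t.re ^ 2 - t.im ^ 2) * (η ^ 4 + ‖t‖ ^ 4)
          - 2 * η ^ 2 * ‖t‖ ^ 4| / ‖(η:ℂ)^2 - t^2‖^4
          ≤ 2*r^2*(η^4+r^4) / (η^4+r^4)^2 :=
        div_le_div₀ (by positivity) hNb (by positivity) hD2
      have hμup := mu_upper σ μ hσ hμ_mono hμ_nm hμ0 hr hη0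
      rw [Real.norm_eq_abs, abs_mul, abs_mul, abs_of_nonneg (hnn η hη0),
        abs_of_nonneg hη0.le, abs_div, abs_of_nonneg (by positivity :
          (0:ℝ) ≤ ‖(η:ℂ)^2 - t^2‖^4)]
      have hstep : μ η * (|(t.re ^ 2 - t.im ^ 2) * (η ^ 4 + ‖t‖ ^ 4)
          - 2 * η ^ 2 * ‖t‖ ^ 4| / ‖(η:ℂ)^2 - t^2‖^4) * η
          ≤ (σ * μ r * (1 + η/r)) * (2*r^2*(η^4+r^4) / (η^4+r^4)^2) * η := by
        refine mul_le_mul (mul_le_mul hμup hdiv (by positivity) ?_) le_rfl hη0.le ?_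
        · positivity
        · positivity
      refine hstep.trans ?_
      have halg : (σ * μ r * (1 + η/r)) * (2*r^2*(η^4+r^4) / (η^4+r^4)^2) * η
          = σ * μ r * (2*(r^2*η + r*η^2)/(η^4+r^4)) := by
        field_simp
      rw [halg, show 6*σ*μ r*(r/(η^2+r^2)) = σ * μ r * (6*r/(η^2+r^2)) by ring]
      exact mul_le_mul_of_nonneg_left (ratio_bound hr hη0) (by positivity)
    have hnorm : ‖∫ η in (0:ℝ)..1, μ η *
          (((t.re ^ 2 - t.im ^ 2) * (η ^ 4 + ‖t‖ ^ 4)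
              - 2 * η ^ 2 * ‖t‖ ^ 4) /
            ‖(η : ℂ) ^ 2 - t ^ 2‖ ^ 4) * η‖
        ≤ |∫ η in (0:ℝ)..1, 6*σ*μ r*(r/(η^2+r^2))| := by
      apply intervalIntegral.norm_integral_le_abs_of_norm_le _ hb_int
      exact (ae_restrict_iff' measurableSet_uIoc).mpr (Filter.Eventually.of_forall hpt)
    have hval : (∫ η in (0:ℝ)..1, 6*σ*μ r*(r/(η^2+r^2)))
        = 6*σ*μ r * Real.arctan (1/r) := by
      rw [show (fun η : ℝ => 6*σ*μ r*(r/(η^2+r^2)))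
          = fun η : ℝ => (6*σ*μ r) * (r/(η^2+r^2)) by funext η; ring] -- may be no-op
      rw [intervalIntegral.integral_const_mul, arctan_integral r hr]
    have harct : 6*σ*μ r * Real.arctan (1/r) ≤ 6*σ*μ r * (Real.pi/2) :=
      mul_le_mul_of_nonneg_left (Real.arctan_lt_pi_div_two _).le (by positivity)
    have harc0 : 0 ≤ Real.arctan (1/r) := by
      have := Real.arctan_strictMono.monotone (le_of_lt (by positivity : (0:ℝ) < 1/r))
      rwa [Real.arctan_zero] at this
    have habs : |∫ η in (0:ℝ)..1, 6*σ*μ r*(r/(η^2+r^2))| ≤ 6*σ*μ r * (Real.pi/2) := by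
      rw [hval, abs_of_nonneg (mul_nonneg (by positivity) harc0)]
      exact harct
    rw [hg, Real.norm_eq_abs, abs_mul, abs_of_nonneg (by norm_num : (0:ℝ) ≤ 8)]
    calc (8:ℝ) * |∫ η in (0:ℝ)..1, μ η *
          (((t.re ^ 2 - t.im ^ 2) * (η ^ 4 + ‖t‖ ^ 4)
              - 2 * η ^ 2 * ‖t‖ ^ 4) /
            ‖(η : ℂ) ^ 2 - t ^ 2‖ ^ 4) * η|
        ≤ 8 * (6*σ*μ r * (Real.pi/2)) := by
          have := hnorm.trans habs
          rw [Real.norm_eq_abs] at this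
          linarith
      _ = 24 * Real.pi * σ * μ r := by ring
  -- conclude via squeeze
  have habs0 : Filter.Tendsto (fun t : ℂ => ‖t‖)
      (nhdsWithin 0 (γs \ {0})) (nhdsWithin 0 (Set.Ioi 0)) := by
    rw [tendsto_nhdsWithin_iff]
    constructor
    · have h := (continuous_norm.tendsto 0).mono_left
        (nhdsWithin_le_nhds (s := γs \ {0}))
      simpa using h
    · filter_upwards [self_mem_nhdsWithin] with t ht
      have ht0 : t ≠ 0 := by simpa using ht.2
      exact norm_pos_iff.mpr ht0
  have hμc : Filter.Tendsto (fun t : ℂ => 24*Real.pi*σ*μ (‖t‖))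
      (nhdsWithin 0 (γs \ {0})) (nhds 0) := by
    have h := (hμ0.comp habs0).const_mul (b := 24*Real.pi*σ)
    simpa using h
  have hev : ∀ᶠ t in nhdsWithin 0 (γs \ {0}), ‖g t‖ ≤ 24*Real.pi*σ*μ (‖t‖) := by
    have hball : Metric.ball (0:ℂ) 1 ∈ nhdsWithin (0:ℂ) (γs \ {0}) :=
      mem_nhdsWithin_of_mem_nhds (Metric.ball_mem_nhds _ one_pos)
    filter_upwards [self_mem_nhdsWithin, hball] with t ht htb
    refine hest t ht.1 (by simpa using ht.2) ?_
    have h := Metric.mem_ball.mp htb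
    rw [Complex.dist_eq, sub_zero] at h
    exact h.le
  have key : Filter.Tendsto g (nhdsWithin 0 (γs \ {0})) (nhds 0) :=
    squeeze_zero_norm' hev hμc
  have key2 : ContinuousWithinAt g (γs \ {0}) 0 := by
    unfold ContinuousWithinAt
    rw [hg0]
    exact key
  exact continuousWithinAt_diff_self.mp key2

/-- For a normal majorant `μ` of class `(σ,1)` with `μ(0⁺) = 0` and the circle
`γ = {t : |t+1| = 1}`, for each `t ∈ γ` the function
`η ↦ 8·μ(η)·[((Re t)² − (Im t)²)(η⁴ + |t|⁴) − 2η²|t|⁴]/|η² − t²|⁴ · η`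
is integrable on `(0,1)`, and the function `g(t) = 8·∫₀¹ ⋯ dη` is continuous on `γ`. -/
theorem gFun_integrable_and_continuous
    (σ : ℝ) (hσ : 1 ≤ σ) (μ : ℝ → ℝ)
    (hμ_mono : ∀ x y : ℝ, 0 < x → x ≤ y → μ x ≤ μ y)
    (hμ_nm : ∀ lam η : ℝ, 1 < lam → 0 < η → μ (lam * η) ≤ σ * lam * μ η)
    (hμ0 : Filter.Tendsto μ (nhdsWithin 0 (Set.Ioi 0)) (nhds 0)) :
    (∀ t ∈ {t : ℂ | ‖t + 1‖ = 1},
      IntervalIntegrable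
        (fun η : ℝ => 8 * (μ η *
          (((t.re ^ 2 - t.im ^ 2) * (η ^ 4 + ‖t‖ ^ 4)
              - 2 * η ^ 2 * ‖t‖ ^ 4) /
            ‖(η : ℂ) ^ 2 - t ^ 2‖ ^ 4) * η))
        MeasureTheory.volume 0 1) ∧
    ContinuousOn
      (fun t : ℂ => 8 * ∫ η in (0 : ℝ)..1, μ η *
          (((t.re ^ 2 - t.im ^ 2) * (η ^ 4 + ‖t‖ ^ 4)
              - 2 * η ^ 2 * ‖t‖ ^ 4) /
            ‖(η : ℂ) ^ 2 - t ^ 2‖ ^ 4) * η)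
      {t : ℂ | ‖t + 1‖ = 1} := by
  refine ⟨gFun_aux_part1 σ hσ μ hμ_mono hμ_nm hμ0, ?_⟩
  intro t₀ ht₀
  by_cases ht0 : t₀ = 0
  · subst ht0
    exact gFun_aux_part3 σ hσ μ hμ_mono hμ_nm hμ0
  · exact gFun_aux_part2 σ hσ μ hμ_mono hμ_nm hμ0 t₀ ht₀ ht0
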